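/- Language of the exclusion automaton for capability-order equivalence. Let Cap be a type with decidable equality and let L : List (Finset Cap) be nonempty with no two consecutive entries equal (List.Chain' (· ≠ ·) L); write k = L.length and Y_j for the j-th entry of L (1-indexed). Consider the DFA over the alphabet Finset Cap with state type Option (Fin (k+1)) (none is a rejecting sink), start state some 0, accepting states all states of the form some i, and transition function: at state some i with 0 ≤ i ≤ k−1, reading Y_{i+1} leads to some (i+1) if i+1 < k and to none if i+1 = k; reading Y_i (only when i ≥ 1) stays at some i; reading any other letter leads to some k; at state some k every letter loops to some k; at none every letter stays at none. Then for every word w : List (Finset Cap), this DFA accepts w if and only if L is NOT a prefix of COrd(w) = List.destutter (· ≠ ·) w. -/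

import Mathlib

/-- Transition function of the exclusion DFA for capability-order equivalence.
States `some i` for `i : Fin (L.length + 1)` track progress through `L`; `none` is a
rejecting sink. -/
def cordStep {Cap : Type*} [DecidableEq Cap] (L : List (Finset Cap)) :
    Option (Fin (L.length + 1)) → Finset Cap → Option (Fin (L.length + 1))
  | none, _ => none
  | some i, a =>
    if h : (i : ℕ) < L.length then
      -- reading Y_{i+1} (the (i+1)-th entry, 1-indexed)
      if a = L.get ⟨i, h⟩ then
        if h' : (i : ℕ) + 1 < L.length then some ⟨(i : ℕ) + 1, by omega⟩
        else none
      else if h0 : 0 < (i : ℕ) then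
        -- reading Y_i (the i-th entry, 1-indexed), only when i ≥ 1: stay
        if a = L.get ⟨(i : ℕ) - 1, by omega⟩ then some i
        -- any other letter: go to the accepting sink `some k`
        else some ⟨L.length, by omega⟩
      else some ⟨L.length, by omega⟩
    else -- i = k: every letter loops
      some i

/-- The exclusion DFA for capability-order equivalence. -/
def cordDFA {Cap : Type*} [DecidableEq Cap] (L : List (Finset Cap)) :
    DFA (Finset Cap) (Option (Fin (L.length + 1))) where
  step := cordStep L
  start := some ⟨0, by omega⟩
  accept := Set.range some

section Helpers

variable {α : Type*} [DecidableEq α]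

private lemma destutter'_concat_ne (a : α) : ∀ (w : List α) (b : α),
    List.destutter' (· ≠ ·) b (w ++ [a]) =
      if (b :: w).getLast? = some a then List.destutter' (· ≠ ·) b w
      else List.destutter' (· ≠ ·) b w ++ [a]
  | [], b => by
    by_cases hba : b = a
    · subst hba
      simp [List.destutter'_singleton, List.destutter'_nil]
    · simp [List.destutter'_singleton, List.destutter'_nil, hba, Ne.symm]
  | c :: w, b => by
    by_cases h : b ≠ c
    · rw [List.cons_append, List.destutter'_cons_pos _ h, List.destutter'_cons_pos _ h,
        destutter'_concat_ne a w c, List.getLast?_cons_cons]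
      split <;> simp
    · push_neg at h
      subst h
      rw [List.cons_append, List.destutter'_cons_neg _ (by simp),
        List.destutter'_cons_neg _ (by simp), destutter'_concat_ne a w b,
        List.getLast?_cons_cons]

private lemma getLast?_destutter'_ne : ∀ (w : List α) (b : α),
    (List.destutter' (· ≠ ·) b w).getLast? = (b :: w).getLast?
  | [], b => by simp
  | c :: w, b => by
    by_cases h : b ≠ c
    · rw [List.destutter'_cons_pos _ h]
      obtain ⟨x, t, hx⟩ := List.exists_cons_of_ne_nil
        (List.destutter'_ne_nil (· ≠ ·) (a := c) (l := w))
      rw [hx, List.getLast?_cons_cons, ← hx, getLast?_destutter'_ne w c,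
        List.getLast?_cons_cons]
    · push_neg at h
      subst h
      rw [List.destutter'_cons_neg _ (by simp), getLast?_destutter'_ne w b,
        List.getLast?_cons_cons]

private lemma getLast?_destutter_ne (w : List α) :
    (List.destutter (· ≠ ·) w).getLast? = w.getLast? := by
  cases w with
  | nil => rfl
  | cons b w => rw [List.destutter_cons', getLast?_destutter'_ne]

private lemma destutter_concat_ne (w : List α) (a : α) :
    List.destutter (· ≠ ·) (w ++ [a]) =
      if w.getLast? = some a then List.destutter (· ≠ ·) w
      else List.destutter (· ≠ ·) w ++ [a] := by
  cases w with
  | nil => simp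
  | cons b w =>
    rw [List.cons_append, List.destutter_cons', List.destutter_cons',
      destutter'_concat_ne]

private lemma getLast?_take_pos {l : List α} {i : ℕ} (h0 : 0 < i) (h : i ≤ l.length) :
    (l.take i).getLast? = some (l.get ⟨i - 1, by omega⟩) := by
  rw [List.getLast?_eq_getElem?, List.length_take, List.getElem?_take,
    if_pos (by omega)]
  rw [show min i l.length - 1 = i - 1 by omega, List.getElem?_eq_getElem (by omega)]
  rfl

private lemma inc_concat {L d : List α} (a : α) (h1 : ¬ L <+: d) (h2 : ¬ d <+: L) :
    ¬ L <+: d ++ [a] ∧ ¬ (d ++ [a]) <+: L := by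
  constructor
  · rintro ⟨t, ht⟩
    rcases List.eq_nil_or_concat t with rfl | ⟨t', a', rfl⟩
    · rw [List.append_nil] at ht
      exact h2 ⟨[a], ht.symm⟩
    · rw [List.concat_eq_append, ← List.append_assoc] at ht
      have : L ++ t' = d := by
        have := congrArg List.dropLast ht
        rwa [List.dropLast_concat, List.dropLast_concat] at this
      exact h1 ⟨t', this⟩
  · intro h
    exact h2 ((List.prefix_append d [a]).trans h)

end Helpers

private lemma cord_inv {Cap : Type*} [DecidableEq Cap] (L : List (Finset Cap))
    (hne : L ≠ []) (hch : List.Chain' (· ≠ ·) L) (w : List (Finset Cap)) :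
    (∃ i : ℕ, ∃ h : i < L.length,
        (cordDFA L).eval w = some ⟨i, by omega⟩ ∧
        List.destutter (· ≠ ·) w = L.take i) ∨
    ((cordDFA L).eval w = some ⟨L.length, by omega⟩ ∧
        ¬ L <+: List.destutter (· ≠ ·) w ∧ ¬ List.destutter (· ≠ ·) w <+: L) ∨
    ((cordDFA L).eval w = none ∧ L <+: List.destutter (· ≠ ·) w) := by
  have hadj : ∀ (j : ℕ), 0 < j → ∀ (hj : j < L.length),
      ¬ L[j - 1]'(by omega) = L[j]'hj := by
    intro j hj0 hj
    have h := List.isChain_iff_getElem.mp hch (j - 1) (by omega)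
    intro hc
    apply h
    convert hc using 2
    omega
  induction w using List.reverseRecOn with
  | nil =>
    left
    refine ⟨0, ?_, ?_, by simp⟩
    · cases L with
      | nil => exact absurd rfl hne
      | cons b l => simp
    · simp [DFA.eval_nil, cordDFA]
  | append_singleton w a ih =>
    have hstep : (cordDFA L).eval (w ++ [a]) = cordStep L ((cordDFA L).eval w) a :=
      DFA.eval_append_singleton _ _ _
    rcases ih with ⟨i, hik, hev, hD⟩ | ⟨hev, h1, h2⟩ | ⟨hev, h1⟩
    · -- progress state
      have he : (cordDFA L).eval (w ++ [a]) = cordStep L (some ⟨i, by omega⟩) a := by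
        rw [hstep, hev]
      have hlast : w.getLast? = (L.take i).getLast? := by
        rw [← getLast?_destutter_ne, hD]
      by_cases ha : a = L[i]'hik
      · -- read next letter of L
        have hne' : ¬ w.getLast? = some a := by
          rw [hlast]
          rcases Nat.eq_zero_or_pos i with h0 | h0
          · subst h0; simp
          · rw [getLast?_take_pos h0 hik.le]
            intro hcon
            rw [Option.some_inj, List.get_eq_getElem] at hcon
            exact hadj i h0 hik (by rw [hcon, ha])
        have hD' : List.destutter (· ≠ ·) (w ++ [a]) = L.take (i + 1) := by
          rw [destutter_concat_ne, if_neg hne', hD, ha,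
            ← List.concat_eq_append, List.take_concat_get]
        by_cases h' : i + 1 < L.length
        · left
          refine ⟨i + 1, h', ?_, hD'⟩
          rw [he]
          simp [cordStep, hik, ha, h']
        · right; right
          constructor
          · rw [he]
            simp [cordStep, hik, ha, h']
          · rw [hD', show i + 1 = L.length by omega, List.take_length]
      · by_cases hstay : 0 < i ∧ a = L[i - 1]'(by omega)
        · -- repeat previous letter: stay
          obtain ⟨h0, ha'⟩ := hstay
          have hD' : List.destutter (· ≠ ·) (w ++ [a]) = L.take i := by
            rw [destutter_concat_ne, hlast, getLast?_take_pos h0 hik.le,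
              if_pos (by rw [ha']; simp), hD]
          left
          refine ⟨i, hik, ?_, hD'⟩
          rw [he]
          simp [cordStep, hik, ha, h0, ha', hadj i h0 hik]
        · -- divergence
          have hne' : ¬ w.getLast? = some a := by
            rw [hlast]
            rcases Nat.eq_zero_or_pos i with h0 | h0
            · subst h0; simp
            · rw [getLast?_take_pos h0 hik.le]
              intro hcon
              rw [Option.some_inj, List.get_eq_getElem] at hcon
              exact hstay ⟨h0, hcon.symm⟩
          have hD' : List.destutter (· ≠ ·) (w ++ [a]) = L.take i ++ [a] := by
            rw [destutter_concat_ne, if_neg hne', hD]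
          have hlt : (L.take i).length = i := by
            rw [List.length_take]; omega
          have hil : i < (L.take i ++ [a]).length := by simp [hlt]
          have h1 : (L.take i ++ [a])[i]'hil = a :=
            List.getElem_concat_length hlt.symm hil
          right; left
          refine ⟨?_, ?_, ?_⟩
          · rw [he]
            rcases Nat.eq_zero_or_pos i with h0 | h0
            · subst h0
              simp [cordStep, hik, ha]
            · have ha' : ¬ a = L[i - 1]'(by omega) := fun hc => hstay ⟨h0, hc⟩
              simp [cordStep, hik, ha, h0, ha']
          · rw [hD']
            intro hp
            apply ha
            have hlen : L.length ≤ i + 1 := by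
              have := hp.length_le
              simpa [hlt] using this
            have hEq : L = L.take i ++ [a] :=
              hp.eq_of_length (by simp [hlt]; omega)
            have h2 := List.getElem_of_eq hEq hik
            rw [h2]
            exact h1.symm
          · rw [hD']
            intro hp
            apply ha
            have h2 : (L.take i ++ [a])[i]'hil = L[i]'hik := hp.getElem hil
            exact h1.symm.trans h2
    · -- accepting sink state
      have he : (cordDFA L).eval (w ++ [a]) =
          cordStep L (some ⟨L.length, by omega⟩) a := by rw [hstep, hev]
      right; left
      refine ⟨by rw [he]; simp [cordStep], ?_⟩
      rw [destutter_concat_ne]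
      split
      · exact ⟨h1, h2⟩
      · exact inc_concat a h1 h2
    · -- rejecting sink
      have he : (cordDFA L).eval (w ++ [a]) = none := by
        rw [hstep, hev]; rfl
      right; right
      refine ⟨he, ?_⟩
      rw [destutter_concat_ne]
      split
      · exact h1
      · exact h1.trans (List.prefix_append _ _)

theorem cordDFA_correct {Cap : Type*} [DecidableEq Cap] (L : List (Finset Cap))
    (hne : L ≠ []) (hch : List.Chain' (· ≠ ·) L) (w : List (Finset Cap)) :
    w ∈ (cordDFA L).accepts ↔ ¬ (L <+: List.destutter (· ≠ ·) w) := by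
  rw [DFA.mem_accepts]
  rcases cord_inv L hne hch w with ⟨i, hik, hev, hD⟩ | ⟨hev, h1, h2⟩ | ⟨hev, h1⟩
  · rw [hev]
    simp only [cordDFA, Set.mem_range]
    constructor
    · intro _ hp
      have := hp.length_le
      rw [hD, List.length_take] at this
      omega
    · exact fun _ => ⟨_, rfl⟩
  · rw [hev]
    simp only [cordDFA, Set.mem_range]
    exact ⟨fun _ => h1, fun _ => ⟨_, rfl⟩⟩
  · rw [hev]
    simp only [cordDFA, Set.mem_range]
    constructor
    · rintro ⟨x, hx⟩; exact absurd hx (by simp)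
    · intro h; exact absurd h1 h
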